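/- Let 0 < p < 2 and let μ be a positive finite Borel measure on [0,1). If the function F(z) = ∑_{n=0}^∞ μ_n z^n (where μ_n = ∫_{[0,1)} t^n dμ(t)) belongs to the Bloch space, i.e. sup_{z∈D} (1-|z|²)|F'(z)| < ∞, then μ_n = O(1/n) and hence μ is a Carleson measure. -/

import Mathlib

open MeasureTheory Set Metric Complex

lemma aux_integrableOn (μ : Measure ℝ) [IsFiniteMeasure μ] (n : ℕ) :
    IntegrableOn (fun t : ℝ => t ^ n) (Set.Ico (0:ℝ) 1) μ := by
  apply Integrable.mono' (integrable_const (1:ℝ))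
  · exact (continuous_pow n).aestronglyMeasurable
  · filter_upwards [ae_restrict_mem measurableSet_Ico] with t ht
    rw [Real.norm_eq_abs, _root_.abs_of_nonneg (pow_nonneg ht.1 n)]
    exact pow_le_one₀ ht.1 ht.2.le

lemma aux_moment_nonneg (μ : Measure ℝ) (n : ℕ) :
    0 ≤ ∫ t in Set.Ico (0:ℝ) 1, t ^ n ∂μ :=
  setIntegral_nonneg measurableSet_Ico fun t ht => pow_nonneg ht.1 n

lemma aux_moment_anti (μ : Measure ℝ) [IsFiniteMeasure μ] {a b : ℕ} (hab : a ≤ b) :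
    (∫ t in Set.Ico (0:ℝ) 1, t ^ b ∂μ) ≤ ∫ t in Set.Ico (0:ℝ) 1, t ^ a ∂μ := by
  apply setIntegral_mono_on (aux_integrableOn μ b) (aux_integrableOn μ a) measurableSet_Ico
  intro t ht
  exact pow_le_pow_of_le_one ht.1 ht.2.le hab

lemma aux_key (μ : Measure ℝ) [IsFiniteMeasure μ] (C : ℝ)
    (hC : ∀ z ∈ Metric.ball (0:ℂ) 1,
      (1 - ‖z‖ ^ 2) *
        ‖deriv (fun w : ℂ =>
            ∑' n : ℕ, ((∫ t in Set.Ico (0:ℝ) 1, t ^ n ∂μ : ℝ) : ℂ) * w ^ n) z‖ ≤ C) :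
    ∀ k : ℕ, 1 ≤ k → (∫ t in Set.Ico (0:ℝ) 1, t ^ k ∂μ) * k ≤ 8 * C := by
  intro k hk
  obtain ⟨m, hm⟩ : ∃ m : ℕ → ℝ, m = fun n => ∫ t in Set.Ico (0:ℝ) 1, t ^ n ∂μ := ⟨_, rfl⟩
  have hmval : ∀ n, m n = ∫ t in Set.Ico (0:ℝ) 1, t ^ n ∂μ := fun n => by rw [hm]
  have hkR : (1:ℝ) ≤ (k:ℝ) := by exact_mod_cast hk
  have hkpos : (0:ℝ) < (k:ℝ) := by linarith
  obtain ⟨r, hrdef⟩ : ∃ r : ℝ, r = 1 - 1/(2*(k:ℝ)) := ⟨_, rfl⟩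
  have hinv : 0 < 1/(2*(k:ℝ)) := by positivity
  have hinv2 : 1/(2*(k:ℝ)) ≤ 1/2 := by
    apply div_le_div_of_nonneg_left (by norm_num) (by norm_num) (by linarith)
  have hr0 : (1:ℝ)/2 ≤ r := by rw [hrdef]; linarith
  have hr1 : r < 1 := by rw [hrdef]; linarith
  have hrpos : (0:ℝ) < r := by linarith
  obtain ⟨ρ, hρdef⟩ : ∃ ρ : ℝ, ρ = (1+r)/2 := ⟨_, rfl⟩
  have hρ1 : ρ < 1 := by rw [hρdef]; linarith
  have hrρ : r < ρ := by rw [hρdef]; linarith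
  have hρ0 : (0:ℝ) < ρ := by rw [hρdef]; linarith
  have hsum_geo : Summable (fun n : ℕ => (n:ℝ) * ρ^n) := by
    have := summable_pow_mul_geometric_of_norm_lt_one (R := ℝ) 1 (r := ρ)
      (by rw [Real.norm_eq_abs, _root_.abs_of_pos hρ0]; exact hρ1)
    simpa using this
  have hu : Summable (fun n : ℕ => (m 0/ρ) * ((n:ℝ) * ρ^n)) := hsum_geo.mul_left _
  have hmle : ∀ n, m n ≤ m 0 := fun n => by
    rw [hmval, hmval]; exact aux_moment_anti μ (Nat.zero_le n)
  have hm0 : ∀ n, 0 ≤ m n := fun n => by rw [hmval]; exact aux_moment_nonneg μ n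
  -- the derivative
  have hder : HasDerivAt (fun w : ℂ => ∑' n : ℕ, ((m n : ℝ) : ℂ) * w ^ n)
      (∑' n : ℕ, ((m n : ℝ) : ℂ) * ((n:ℂ) * (r:ℂ)^(n-1))) (r:ℂ) := by
    refine hasDerivAt_tsum_of_isPreconnected (u := fun n : ℕ => (m 0/ρ) * ((n:ℝ) * ρ^n))
      (g := fun (n : ℕ) (w : ℂ) => ((m n : ℝ) : ℂ) * w ^ n)
      (g' := fun (n : ℕ) (y : ℂ) => ((m n : ℝ) : ℂ) * ((n:ℂ) * y^(n-1)))
      hu isOpen_ball (convex_ball (0:ℂ) ρ).isPreconnected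
      (fun n y _ => (hasDerivAt_pow n y).const_mul _)
      ?_ (mem_ball_self hρ0) ?_ ?_
    · intro n y hy
      rw [mem_ball_zero_iff] at hy
      cases n with
      | zero => simp
      | succ n =>
        have h1 : ‖((m (n+1) : ℝ) : ℂ)‖ = m (n+1) := by
          rw [Complex.norm_real, Real.norm_eq_abs, _root_.abs_of_nonneg (hm0 _)]
        rw [norm_mul, norm_mul, h1, norm_pow, Nat.add_sub_cancel, Complex.norm_natCast]
        have h2 : ‖y‖ ^ n ≤ ρ ^ n := pow_le_pow_left₀ (norm_nonneg y) hy.le n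
        have hrhs : (m 0/ρ) * ((((n+1:ℕ)):ℝ) * ρ^(n+1)) = m 0 * ((((n+1:ℕ)):ℝ) * ρ^n) := by
          rw [pow_succ]; field_simp
        rw [hrhs]
        apply mul_le_mul (hmle _) _ (by positivity) (hm0 0)
        exact mul_le_mul_of_nonneg_left h2 (by positivity)
    · apply summable_of_ne_finset_zero (s := ({0} : Finset ℕ))
      intro n hn
      simp only [Finset.mem_singleton] at hn
      rw [zero_pow hn, mul_zero]
    · rw [mem_ball_zero_iff, Complex.norm_real, Real.norm_eq_abs, _root_.abs_of_pos hrpos]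
      exact hrρ
  -- real series
  have hsummand_nonneg : ∀ n : ℕ, 0 ≤ m n * ((n:ℝ) * r^(n-1)) := by
    intro n
    have h1 : (0:ℝ) ≤ r^(n-1) := pow_nonneg hrpos.le _
    have h2 := hm0 n
    positivity
  have hsummable : Summable (fun n : ℕ => m n * ((n:ℝ) * r^(n-1))) := by
    apply Summable.of_nonneg_of_le hsummand_nonneg _ hu
    intro n
    cases n with
    | zero => simp
    | succ n =>
      have h2 : r ^ n ≤ ρ ^ n := pow_le_pow_left₀ hrpos.le hrρ.le n
      have hstep : m (n+1) * (((n+1:ℕ):ℝ) * r^(n+1-1)) ≤ m 0 * (((n+1:ℕ):ℝ) * ρ^n) := by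
        rw [Nat.add_sub_cancel]
        apply mul_le_mul (hmle _) _ (by positivity) (hm0 0)
        exact mul_le_mul_of_nonneg_left h2 (by positivity)
      refine hstep.trans (le_of_eq ?_)
      push_cast
      field_simp
      ring
  obtain ⟨S, hS⟩ : ∃ S : ℝ, S = ∑' n : ℕ, m n * ((n:ℝ) * r^(n-1)) := ⟨_, rfl⟩
  have hSnonneg : 0 ≤ S := hS ▸ tsum_nonneg hsummand_nonneg
  have hDval : (∑' n : ℕ, ((m n : ℝ) : ℂ) * ((n:ℂ) * (r:ℂ)^(n-1))) = ((S:ℝ) : ℂ) := by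
    rw [hS, Complex.ofReal_tsum]
    apply tsum_congr
    intro n
    push_cast
    ring
  have hfun : (fun w : ℂ => ∑' n : ℕ, ((∫ t in Set.Ico (0:ℝ) 1, t ^ n ∂μ : ℝ) : ℂ) * w ^ n)
      = (fun w : ℂ => ∑' n : ℕ, ((m n : ℝ) : ℂ) * w ^ n) := by rw [hm]
  have hCr := hC (r:ℂ) (by
    rw [mem_ball_zero_iff, Complex.norm_real, Real.norm_eq_abs, _root_.abs_of_pos hrpos]
    exact hr1)
  rw [hfun, hder.deriv, hDval] at hCr
  have hnorm : ‖((S:ℝ):ℂ)‖ = S := by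
    rw [Complex.norm_real, Real.norm_eq_abs, _root_.abs_of_nonneg hSnonneg]
  have hnr : ‖((r:ℝ):ℂ)‖ = r := by
    rw [Complex.norm_real, Real.norm_eq_abs, _root_.abs_of_pos hrpos]
  rw [hnorm, hnr] at hCr
  -- lower bound for S
  have hrk : (1:ℝ)/2 ≤ r^k := by
    have hber := one_add_mul_le_pow (a := -(1/(2*(k:ℝ)))) (by linarith) k
    have heq : (1 + -(1/(2*(k:ℝ))))^k = r^k := by rw [hrdef, sub_eq_add_neg]
    rw [heq] at hber
    have hhalf : (k:ℝ)*(1/(2*(k:ℝ))) = 1/2 := by field_simp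
    nlinarith
  have hterm : ∀ n ∈ Finset.range (k+1), m k * ((n:ℝ) * (1/2)) ≤ m n * ((n:ℝ) * r^(n-1)) := by
    intro n hn
    rw [Finset.mem_range] at hn
    have hnk : n ≤ k := Nat.lt_succ_iff.mp hn
    have h1 : r^k ≤ r^(n-1) := pow_le_pow_of_le_one hrpos.le hr1.le (by omega)
    have h2 : (1:ℝ)/2 ≤ r^(n-1) := le_trans hrk h1
    have h3 : m k ≤ m n := by rw [hmval, hmval]; exact aux_moment_anti μ hnk
    apply mul_le_mul h3 _ (by positivity) (hm0 n)
    exact mul_le_mul_of_nonneg_left h2 (by positivity)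
  have hgauss : (∑ n ∈ Finset.range (k+1), (n:ℝ)) = (k:ℝ)*((k:ℝ)+1)/2 := by
    have h2 : ((∑ i ∈ Finset.range (k+1), i) * 2 : ℕ) = (k+1)*k := Finset.sum_range_id_mul_two (k+1)
    have h2' := congrArg (fun x : ℕ => (x:ℝ)) h2
    push_cast at h2'
    linarith
  have hSlb : m k * ((k:ℝ)*((k:ℝ)+1)/4) ≤ S := by
    have hsum1 : (∑ n ∈ Finset.range (k+1), m k * ((n:ℝ) * (1/2)))
        ≤ ∑ n ∈ Finset.range (k+1), m n * ((n:ℝ) * r^(n-1)) :=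
      Finset.sum_le_sum hterm
    have hsum2 : (∑ n ∈ Finset.range (k+1), m n * ((n:ℝ) * r^(n-1)))
        ≤ ∑' n : ℕ, m n * ((n:ℝ) * r^(n-1)) :=
      hsummable.sum_le_tsum _ (fun n _ => hsummand_nonneg n)
    have hsum3 : (∑ n ∈ Finset.range (k+1), m k * ((n:ℝ) * (1/2)))
        = m k * ((k:ℝ)*((k:ℝ)+1)/4) := by
      rw [← Finset.mul_sum]
      rw [show (∑ n ∈ Finset.range (k+1), (n:ℝ) * (1/2))
          = (∑ n ∈ Finset.range (k+1), (n:ℝ)) * (1/2) from (Finset.sum_mul ..).symm]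
      rw [hgauss]; ring
    rw [hS]
    linarith
  -- conclude
  have h1r : (1 - r) * S ≤ C := by
    nlinarith [mul_nonneg (mul_nonneg hrpos.le (by linarith : (0:ℝ) ≤ 1 - r)) hSnonneg]
  have h1req : 1 - r = 1/(2*(k:ℝ)) := by rw [hrdef]; ring
  have hS2 : S ≤ 2*(k:ℝ)*C := by
    rw [h1req] at h1r
    have hmul := mul_le_mul_of_nonneg_left h1r (by positivity : (0:ℝ) ≤ 2*(k:ℝ))
    have heq : 2*(k:ℝ) * (1/(2*(k:ℝ)) * S) = S := by field_simp
    linarith [heq ▸ hmul]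
  have hfin : m k * (k:ℝ) * (k:ℝ) ≤ 8*C*(k:ℝ) := by nlinarith [hm0 k]
  have hfinal := le_of_mul_le_mul_right
    (by linarith : (m k * (k:ℝ)) * (k:ℝ) ≤ (8*C) * (k:ℝ)) hkpos
  rw [hmval] at hfinal
  exact hfinal

theorem carleson_of_moment_series_Bloch (p : ℝ) (hp0 : 0 < p) (hp2 : p < 2)
    (μ : Measure ℝ) [IsFiniteMeasure μ]
    (hbloch : ∃ C : ℝ, ∀ z ∈ Metric.ball (0:ℂ) 1,
      (1 - ‖z‖ ^ 2) *
        ‖deriv (fun w : ℂ =>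
            ∑' n : ℕ, ((∫ t in Set.Ico (0:ℝ) 1, t ^ n ∂μ : ℝ) : ℂ) * w ^ n) z‖ ≤ C) :
    (∃ C : ℝ, ∀ n : ℕ, 1 ≤ n → (∫ t in Set.Ico (0:ℝ) 1, t ^ n ∂μ) ≤ C / n) ∧
    (∃ C : ℝ, ∀ t ∈ Set.Ico (0:ℝ) 1, (μ (Set.Ico t 1)).toReal ≤ C * (1 - t)) := by
  obtain ⟨C, hC⟩ := hbloch
  have key := aux_key μ C hC
  have hC0 : 0 ≤ C := by
    refine le_trans ?_ (hC 0 (by simp))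
    rw [norm_zero]
    positivity
  constructor
  · refine ⟨8*C, fun n hn => ?_⟩
    have hnpos : (0:ℝ) < (n:ℝ) := by exact_mod_cast hn
    rw [le_div_iff₀ hnpos]
    exact key n hn
  · refine ⟨64*C + 4*(μ Set.univ).toReal, fun t ht => ?_⟩
    have h1t : 0 < 1 - t := by linarith [ht.2]
    have hXnn : 0 ≤ (μ (Set.Ico t 1)).toReal := ENNReal.toReal_nonneg
    have hMnn : 0 ≤ (μ Set.univ).toReal := ENNReal.toReal_nonneg
    have hXle : (μ (Set.Ico t 1)).toReal ≤ (μ Set.univ).toReal :=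
      ENNReal.toReal_mono (measure_ne_top μ _) (measure_mono (Set.subset_univ _))
    by_cases hcase : t < 3/4
    · have h14 : (1:ℝ)/4 ≤ 1 - t := by linarith
      nlinarith [mul_nonneg hC0 h1t.le, mul_nonneg hMnn (by linarith : (0:ℝ) ≤ 4*(1-t) - 1)]
    · push_neg at hcase
      have hx2 : (2:ℝ) ≤ 1/(2*(1-t)) := by
        rw [le_div_iff₀ (by positivity)]
        linarith
      have hk2 : 2 ≤ ⌊1/(2*(1-t))⌋₊ := Nat.le_floor (by exact_mod_cast hx2)
      have hk1 : 1 ≤ ⌊1/(2*(1-t))⌋₊ := le_trans one_le_two hk2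
      have hkleb : ((⌊1/(2*(1-t))⌋₊ : ℕ):ℝ) ≤ 1/(2*(1-t)) := Nat.floor_le (by positivity)
      have hkgt : 1/(2*(1-t)) - 1 < ((⌊1/(2*(1-t))⌋₊ : ℕ):ℝ) := Nat.sub_one_lt_floor _
      have hkR2 : (2:ℝ) ≤ ((⌊1/(2*(1-t))⌋₊ : ℕ):ℝ) := by exact_mod_cast hk2
      have hKpos : (0:ℝ) < ((⌊1/(2*(1-t))⌋₊ : ℕ):ℝ) := by linarith
      set k := ⌊1/(2*(1-t))⌋₊ with hkdef
      -- lower bound on K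
      have hKlb : 1/(4*(1-t)) ≤ ((k:ℕ):ℝ) := by
        have hhalf : 1/(4*(1-t)) = (1/(2*(1-t)))/2 := by
          field_simp; ring
        linarith
      -- t^k lower bound
      have htk : (1:ℝ)/2 ≤ t^k := by
        have hber := one_add_mul_le_pow (a := -(1-t)) (by linarith) k
        have heq : (1 + -(1-t)) = t := by ring
        rw [heq] at hber
        have hkt : ((k:ℕ):ℝ)*(1-t) ≤ 1/2 := by
          have h1 : ((k:ℕ):ℝ)*(1-t) ≤ (1/(2*(1-t)))*(1-t) :=
            mul_le_mul_of_nonneg_right hkleb h1t.le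
          have h2 : (1/(2*(1-t)))*(1-t) = 1/2 := by field_simp
          linarith
        nlinarith
      -- integral bound
      have hsub : Set.Ico t 1 ⊆ Set.Ico (0:ℝ) 1 := Set.Ico_subset_Ico ht.1 le_rfl
      have hint : t^k * (μ (Set.Ico t 1)).toReal ≤ ∫ s in Set.Ico (0:ℝ) 1, s^k ∂μ := by
        have step1 : t^k * (μ (Set.Ico t 1)).toReal ≤ ∫ s in Set.Ico t 1, s^k ∂μ :=
          setIntegral_ge_of_const_le_real measurableSet_Ico (measure_ne_top μ _)
            (fun x hx => pow_le_pow_left₀ ht.1 hx.1 k)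
            ((aux_integrableOn μ k).mono_set hsub)
        have step2 : (∫ s in Set.Ico t 1, s^k ∂μ) ≤ ∫ s in Set.Ico (0:ℝ) 1, s^k ∂μ :=
          setIntegral_mono_set (aux_integrableOn μ k)
            ((ae_restrict_mem measurableSet_Ico).mono fun x hx => pow_nonneg hx.1 k)
            (HasSubset.Subset.eventuallyLE hsub)
        linarith
      have hkey := key k hk1
      have hInn := aux_moment_nonneg μ k
      -- combine
      have hX2I : (μ (Set.Ico t 1)).toReal ≤ 2*(∫ s in Set.Ico (0:ℝ) 1, s^k ∂μ) := by
        nlinarith [hint, htk, hXnn]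
      have hXK : (μ (Set.Ico t 1)).toReal * ((k:ℕ):ℝ) ≤ 16*C := by
        nlinarith [hkey, mul_nonneg (by linarith : (0:ℝ) ≤ 2*(∫ s in Set.Ico (0:ℝ) 1, s^k ∂μ) - (μ (Set.Ico t 1)).toReal) hKpos.le]
      have hq : (1:ℝ)/4 ≤ (1-t)*((k:ℕ):ℝ) := by
        have h1 := mul_le_mul_of_nonneg_left hKlb h1t.le
        have h2 : (1-t)*(1/(4*(1-t))) = 1/4 := by field_simp
        linarith
      have h64 : (μ (Set.Ico t 1)).toReal ≤ 64*C*(1-t) := by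
        have h1 : (μ (Set.Ico t 1)).toReal ≤ 16*C/((k:ℕ):ℝ) := (le_div_iff₀ hKpos).2 hXK
        have h2 : 16*C/((k:ℕ):ℝ) ≤ 64*C*(1-t) := by
          rw [div_le_iff₀ hKpos]
          nlinarith [mul_nonneg hC0 (by linarith : (0:ℝ) ≤ 4*((1-t)*((k:ℕ):ℝ)) - 1)]
        linarith
      have hexp : (64*C + 4*(μ Set.univ).toReal)*(1-t)
          = 64*C*(1-t) + 4*((μ Set.univ).toReal*(1-t)) := by ring
      have hpos : 0 ≤ (μ Set.univ).toReal*(1-t) := mul_nonneg hMnn h1t.le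
      linarith
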